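/- For every prime p and every integer e ≥ 1, there exists an integer n ≥ 1 such that g_n(p^e) ≥ p^E, where E = e²/8 if e ≡ 0 (mod 4), E = (e² − 1)/8 if e is odd, and E = (e² − 4)/8 if e ≡ 2 (mod 4). -/

import Mathlib

open scoped BigOperators

/-- The number of subrings with identity of `ℤ^n` (componentwise operations)
of additive index `k`. -/
noncomputable def numSubrings (n k : ℕ) : ℕ :=
  Nat.card {S : Subring (Fin n → ℤ) // S.toAddSubgroup.index = k}

/-- The number of irreducible subrings of `ℤ^n` of index `p ^ e`: subrings of
additive index `p ^ e` all of whose elements have all coordinates congruent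
modulo `p`. -/
noncomputable def numIrrSubrings (n p e : ℕ) : ℕ :=
  Nat.card {S : Subring (Fin n → ℤ) //
    S.toAddSubgroup.index = p ^ e ∧
    ∀ x ∈ S, ∀ i j : Fin n, (p : ℤ) ∣ x i - x j}

/-- An integer matrix is in Hermite normal form if it is upper triangular and
`0 ≤ a i j < a i i` for `i < j`. -/
def IsHermiteNormalForm {n : ℕ} (A : Matrix (Fin n) (Fin n) ℤ) : Prop :=
  (∀ i j : Fin n, j < i → A i j = 0) ∧
  ∀ i j : Fin n, i < j → 0 ≤ A i j ∧ A i j < A i i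

/-- A subring matrix is a matrix in Hermite normal form such that the all-ones
vector lies in the ℤ-span of its columns and the componentwise product of any
two columns lies in the ℤ-span of its columns. -/
def IsSubringMatrix {n : ℕ} (A : Matrix (Fin n) (Fin n) ℤ) : Prop :=
  IsHermiteNormalForm A ∧
  (1 : Fin n → ℤ) ∈ Set.range A.mulVec ∧
  ∀ j k : Fin n, (fun i => A i j * A i k) ∈ Set.range A.mulVec

/-- For a composition `α` of length `m`, the number of `(m+1) × (m+1)` subring
matrices with diagonal `(p ^ α 0, …, p ^ α (m-1), 1)`, all entries of the first
`m` columns divisible by `p`, and last column `(1,…,1)ᵀ`. -/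
noncomputable def gComp (p : ℕ) {m : ℕ} (α : Fin m → ℕ) : ℕ :=
  Nat.card {A : Matrix (Fin (m + 1)) (Fin (m + 1)) ℤ //
    IsSubringMatrix A ∧
    (∀ i : Fin m, A i.castSucc i.castSucc = (p : ℤ) ^ α i) ∧
    (∀ i : Fin (m + 1), ∀ j : Fin m, (p : ℤ) ∣ A i j.castSucc) ∧
    ∀ i : Fin (m + 1), A i (Fin.last m) = 1}

namespace MaxGAux

variable (p : ℕ)

/-- coordinate embeddings -/
def jD {d r : ℕ} (j : Fin d) : Fin (d + r + 1) := (Fin.castAdd r j).castSucc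
def kR {d r : ℕ} (k : Fin r) : Fin (d + r + 1) := (Fin.natAdd d k).castSucc

/-- the linear forms -/
def lamv {d r : ℕ} (B : Fin r → Fin d → ZMod p) (k : Fin r) : Fin (d + r + 1) → ℤ :=
  Fin.snoc (Fin.append (fun j => -((B k j).val : ℤ))
    (fun k' => if k' = k then 1 else 0)) ((∑ j, ((B k j).val : ℤ)) - 1)

theorem dot_lam {d r : ℕ} (B : Fin r → Fin d → ZMod p) (k : Fin r) (x : Fin (d + r + 1) → ℤ) :
    ∑ i, lamv p B k i * x i =
      (x (kR k) - x (Fin.last (d + r))) +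
        ∑ j, ((B k j).val : ℤ) * (x (Fin.last (d + r)) - x (jD j)) := by
  rw [Fin.sum_univ_castSucc, Fin.sum_univ_add]
  simp only [lamv, Fin.snoc_castSucc, Fin.snoc_last, Fin.append_left, Fin.append_right,
    ite_mul, one_mul, zero_mul, Finset.sum_ite_eq', Finset.mem_univ, if_true, jD, kR]
  rw [sub_one_mul, Finset.sum_mul]
  simp only [mul_sub, Finset.sum_sub_distrib, neg_mul, Finset.sum_neg_distrib]
  abel


theorem dot_lam_one {d r : ℕ} (B : Fin r → Fin d → ZMod p) (k : Fin r) :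
    ∑ i, lamv p B k i * (1 : Fin (d + r + 1) → ℤ) i = 0 := by
  rw [dot_lam]; simp

/-- the subring attached to the parameter matrix `B` -/
def LB {d r : ℕ} (B : Fin r → Fin d → ZMod p) : Subring (Fin (d + r + 1) → ℤ) where
  carrier := {x | (∀ i i', (p : ℤ) ∣ x i - x i') ∧
      ∀ k, (p : ℤ) ^ 2 ∣ ∑ i, lamv p B k i * x i}
  zero_mem' := by
    refine ⟨fun i i' => by simp, fun k => by simp only [Pi.zero_apply, mul_zero, Finset.sum_const_zero]; exact dvd_zero _⟩
  one_mem' := by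
    refine ⟨fun i i' => by simp, fun k => ?_⟩
    rw [dot_lam_one]
    exact dvd_zero _
  add_mem' := by
    rintro x y ⟨hx1, hx2⟩ ⟨hy1, hy2⟩
    refine ⟨fun i i' => ?_, fun k => ?_⟩
    · have : x i + y i - (x i' + y i') = (x i - x i') + (y i - y i') := by ring
      rw [Pi.add_apply, Pi.add_apply, this]
      exact dvd_add (hx1 i i') (hy1 i i')
    · have : ∑ i, lamv p B k i * (x + y) i
          = (∑ i, lamv p B k i * x i) + ∑ i, lamv p B k i * y i := by
        rw [← Finset.sum_add_distrib]
        exact Finset.sum_congr rfl fun i _ => by simp [mul_add]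
      rw [this]
      exact dvd_add (hx2 k) (hy2 k)
  neg_mem' := by
    rintro x ⟨hx1, hx2⟩
    refine ⟨fun i i' => ?_, fun k => ?_⟩
    · have : (-x) i - (-x) i' = -(x i - x i') := by simp; ring
      rw [this]
      exact (hx1 i i').neg_right
    · have : ∑ i, lamv p B k i * (-x) i = -∑ i, lamv p B k i * x i := by
        rw [← Finset.sum_neg_distrib]
        exact Finset.sum_congr rfl fun i _ => by simp
      rw [this]
      exact (hx2 k).neg_right
  mul_mem' := by
    rintro x y ⟨hx1, hx2⟩ ⟨hy1, hy2⟩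
    refine ⟨fun i i' => ?_, fun k => ?_⟩
    · have : x i * y i - x i' * y i' = x i * (y i - y i') + y i' * (x i - x i') := by ring
      rw [Pi.mul_apply, Pi.mul_apply, this]
      exact dvd_add ((hy1 i i').mul_left _) ((hx1 i i').mul_left _)
    · set c := x (Fin.last (d + r)) with hc
      set c' := y (Fin.last (d + r)) with hc'
      have key : ∑ i, lamv p B k i * (x * y) i
          = c' * (∑ i, lamv p B k i * x i) + c * (∑ i, lamv p B k i * y i)
            - (c * c') * (∑ i, lamv p B k i * (1 : Fin (d + r + 1) → ℤ) i)
            + ∑ i, lamv p B k i * ((x i - c) * (y i - c')) := by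
        simp only [Finset.mul_sum, ← Finset.sum_sub_distrib, ← Finset.sum_add_distrib]
        exact Finset.sum_congr rfl fun i _ => by simp only [Pi.mul_apply, Pi.one_apply]; ring
      rw [key, dot_lam_one, mul_zero, sub_zero]
      refine dvd_add (dvd_add ((hx2 k).mul_left _) ((hy2 k).mul_left _)) ?_
      refine Finset.dvd_sum fun i _ => ?_
      rw [sq]
      exact (mul_dvd_mul (hx1 i _) (hy1 i _)).mul_left _

theorem mem_LB {d r : ℕ} (B : Fin r → Fin d → ZMod p) (x : Fin (d + r + 1) → ℤ) :
    x ∈ LB p B ↔ (∀ i i', (p : ℤ) ∣ x i - x i') ∧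
      ∀ k, (p : ℤ) ^ 2 ∣ ∑ i, lamv p B k i * x i := Iff.rfl


/-- reduction mod p of differences against the last coordinate -/
def phi1 (d r : ℕ) : (Fin (d + r + 1) → ℤ) →+ (Fin (d + r) → ZMod p) where
  toFun x := fun i => ((x i.castSucc - x (Fin.last (d + r)) : ℤ) : ZMod p)
  map_zero' := by funext i; simp
  map_add' x y := by funext i; push_cast [Pi.add_apply]; ring

theorem mem_ker_phi1 (hp : p.Prime) {d r : ℕ} (x : Fin (d + r + 1) → ℤ) :
    x ∈ (phi1 p d r).ker ↔
      ∀ i : Fin (d + r), (p : ℤ) ∣ x i.castSucc - x (Fin.last (d + r)) := by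
  haveI : NeZero p := ⟨hp.ne_zero⟩
  simp [phi1, AddMonoidHom.mem_ker, funext_iff, ← Int.cast_sub, ZMod.intCast_zmod_eq_zero_iff_dvd]

theorem phi1_surjective (hp : p.Prime) (d r : ℕ) : Function.Surjective (phi1 p d r) := by
  haveI : NeZero p := ⟨hp.ne_zero⟩
  intro v
  refine ⟨Fin.snoc (fun i => ((v i).val : ℤ)) 0, funext fun i => ?_⟩
  simp [phi1, Fin.snoc_castSucc, Fin.snoc_last, ZMod.natCast_val, ZMod.cast_id]

theorem index_ker_phi1 (hp : p.Prime) (d r : ℕ) :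
    (phi1 p d r).ker.index = p ^ (d + r) := by
  haveI : NeZero p := ⟨hp.ne_zero⟩
  rw [AddSubgroup.index_ker]
  have : ((phi1 p d r).range : Set (Fin (d + r) → ZMod p)) = Set.univ := by
    rw [Set.eq_univ_iff_forall]
    exact fun v => phi1_surjective p hp d r v
  rw [Nat.card_congr (Equiv.subtypeUnivEquiv (fun v => by
    have := phi1_surjective p hp d r v; exact this))]
  rw [Nat.card_fun, Nat.card_zmod, Nat.card_eq_fintype_card, Fintype.card_fin]


theorem dot_add {N : ℕ} (v x y : Fin N → ℤ) :
    ∑ i, v i * (x + y) i = ∑ i, v i * x i + ∑ i, v i * y i := by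
  rw [← Finset.sum_add_distrib]
  exact Finset.sum_congr rfl fun i _ => by simp [mul_add]

theorem dot_pmul {N : ℕ} (c : ℤ) (v w : Fin N → ℤ) :
    ∑ i, v i * (c * w i) = c * ∑ i, v i * w i := by
  rw [Finset.mul_sum]
  exact Finset.sum_congr rfl fun i _ => by ring

theorem pairwise_of_mem_ker {d r : ℕ} (hp : p.Prime) {x : Fin (d + r + 1) → ℤ}
    (hx : x ∈ (phi1 p d r).ker) : ∀ i i', (p : ℤ) ∣ x i - x i' := by
  have h : ∀ i, (p : ℤ) ∣ x i - x (Fin.last (d + r)) := by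
    intro i
    induction i using Fin.lastCases with
    | last => simp
    | cast i => exact (mem_ker_phi1 p hp x).mp hx i
  intro i i'
  have := (h i).sub (h i')
  simpa using this

theorem dvd_dot_of_mem_ker {d r : ℕ} (hp : p.Prime) (B : Fin r → Fin d → ZMod p)
    {x : Fin (d + r + 1) → ℤ} (hx : x ∈ (phi1 p d r).ker) (k : Fin r) :
    (p : ℤ) ∣ ∑ i, lamv p B k i * x i := by
  rw [dot_lam]
  refine dvd_add (pairwise_of_mem_ker p hp hx _ _) (Finset.dvd_sum fun j _ => ?_)
  exact (pairwise_of_mem_ker p hp hx _ _).mul_left _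

/-- the second-layer map on the kernel of `phi1` -/
def phi2 (hp : p.Prime) {d r : ℕ} (B : Fin r → Fin d → ZMod p) :
    (phi1 p d r).ker →+ (Fin r → ZMod p) where
  toFun x := fun k => (((∑ i, lamv p B k i * x.1 i) / (p : ℤ)) : ZMod p)
  map_zero' := by funext k; simp
  map_add' x y := by
    have hp0 : (p : ℤ) ≠ 0 := Int.natCast_ne_zero.mpr hp.ne_zero
    funext k
    obtain ⟨a, ha⟩ := dvd_dot_of_mem_ker p hp B x.2 k
    obtain ⟨b, hb⟩ := dvd_dot_of_mem_ker p hp B y.2 k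
    have hadd : ∑ i, lamv p B k i * ((x + y : (phi1 p d r).ker) : Fin (d + r + 1) → ℤ) i
        = (p : ℤ) * a + (p : ℤ) * b := by
      rw [show ((x + y : (phi1 p d r).ker) : Fin (d + r + 1) → ℤ) = x.1 + y.1 from rfl,
        dot_add, ha, hb]
    show (((∑ i, lamv p B k i * ((x + y : (phi1 p d r).ker) : Fin (d + r + 1) → ℤ) i) / (p : ℤ) : ℤ) : ZMod p)
        = (((∑ i, lamv p B k i * x.1 i) / (p : ℤ) : ℤ) : ZMod p)
          + (((∑ i, lamv p B k i * y.1 i) / (p : ℤ) : ℤ) : ZMod p)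
    rw [hadd, ha, hb, ← mul_add, Int.mul_ediv_cancel_left _ hp0,
      Int.mul_ediv_cancel_left _ hp0, Int.mul_ediv_cancel_left _ hp0]
    push_cast
    ring

theorem addSubgroupOf_eq_ker_phi2 (hp : p.Prime) {d r : ℕ} (B : Fin r → Fin d → ZMod p) :
    (LB p B).toAddSubgroup.addSubgroupOf (phi1 p d r).ker = (phi2 p hp B).ker := by
  haveI : NeZero p := ⟨hp.ne_zero⟩
  have hp0 : (p : ℤ) ≠ 0 := Int.natCast_ne_zero.mpr hp.ne_zero
  ext x
  rw [AddSubgroup.mem_addSubgroupOf, AddMonoidHom.mem_ker]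
  have hmem : x.1 ∈ (LB p B).toAddSubgroup ↔ x.1 ∈ LB p B := Iff.rfl
  rw [hmem, mem_LB, funext_iff]
  constructor
  · rintro ⟨-, h2⟩ k
    obtain ⟨a, ha⟩ := dvd_dot_of_mem_ker p hp B x.2 k
    have : (p : ℤ) ∣ a := by
      have := h2 k
      rw [ha, sq] at this
      exact (mul_dvd_mul_iff_left hp0).mp this
    show (((∑ i, lamv p B k i * x.1 i) / (p : ℤ) : ℤ) : ZMod p) = _
    rw [ha, Int.mul_ediv_cancel_left _ hp0]
    simpa [ZMod.intCast_zmod_eq_zero_iff_dvd] using this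
  · intro h
    refine ⟨pairwise_of_mem_ker p hp x.2, fun k => ?_⟩
    obtain ⟨a, ha⟩ := dvd_dot_of_mem_ker p hp B x.2 k
    have hk := h k
    rw [show (phi2 p hp B) x k = (((∑ i, lamv p B k i * x.1 i) / (p : ℤ) : ℤ) : ZMod p) from rfl,
      ha, Int.mul_ediv_cancel_left _ hp0] at hk
    have : (p : ℤ) ∣ a := by
      simpa [ZMod.intCast_zmod_eq_zero_iff_dvd] using hk
    rw [ha, sq]
    exact mul_dvd_mul_left _ this

theorem phi2_surjective (hp : p.Prime) {d r : ℕ} (B : Fin r → Fin d → ZMod p) :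
    Function.Surjective (phi2 p hp B) := by
  haveI : NeZero p := ⟨hp.ne_zero⟩
  have hp0 : (p : ℤ) ≠ 0 := Int.natCast_ne_zero.mpr hp.ne_zero
  intro t
  set w : Fin (d + r + 1) → ℤ :=
    Fin.snoc (Fin.append (fun _ => (0 : ℤ)) (fun k => ((t k).val : ℤ))) 0 with hw
  have hy : (fun i => (p : ℤ) * w i) ∈ (phi1 p d r).ker := by
    rw [mem_ker_phi1 p hp]
    intro i
    exact ⟨w i.castSucc - w (Fin.last (d + r)), by ring⟩
  refine ⟨⟨fun i => (p : ℤ) * w i, hy⟩, funext fun k => ?_⟩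
  show (((∑ i, lamv p B k i * ((p : ℤ) * w i)) / (p : ℤ) : ℤ) : ZMod p) = t k
  rw [dot_pmul, Int.mul_ediv_cancel_left _ hp0, dot_lam]
  have h1 : w (kR k) = ((t k).val : ℤ) := by
    simp only [hw, kR, Fin.snoc_castSucc, Fin.append_right]
  have h2 : w (Fin.last (d + r)) = 0 := by simp [hw]
  have h3 : ∀ j : Fin d, w (jD j) = 0 := fun j => by
    simp [hw, jD, Fin.snoc_castSucc, Fin.append_left]
  rw [h1, h2]
  simp only [h3, sub_zero, zero_sub, sub_zero, mul_zero, sub_self, Finset.sum_const_zero, add_zero]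
  simp [ZMod.natCast_val, ZMod.cast_id]

theorem LB_le_ker (hp : p.Prime) {d r : ℕ} (B : Fin r → Fin d → ZMod p) :
    (LB p B).toAddSubgroup ≤ (phi1 p d r).ker := by
  intro x hx
  rw [mem_ker_phi1 p hp]
  intro i
  exact hx.1 _ _

theorem index_LB (hp : p.Prime) {d r : ℕ} (B : Fin r → Fin d → ZMod p) :
    (LB p B).toAddSubgroup.index = p ^ (d + 2 * r) := by
  haveI : NeZero p := ⟨hp.ne_zero⟩
  rw [← AddSubgroup.relIndex_mul_index (LB_le_ker p hp B), index_ker_phi1 p hp]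
  have hrel : (LB p B).toAddSubgroup.relIndex (phi1 p d r).ker = p ^ r := by
    show ((LB p B).toAddSubgroup.addSubgroupOf (phi1 p d r).ker).index = p ^ r
    rw [addSubgroupOf_eq_ker_phi2 p hp B, AddSubgroup.index_ker]
    have htop : (phi2 p hp B).range = ⊤ :=
      AddMonoidHom.range_eq_top.mpr (phi2_surjective p hp B)
    rw [htop,
      show Nat.card (⊤ : AddSubgroup (Fin r → ZMod p)) = Nat.card (Fin r → ZMod p) from
        Nat.card_congr AddSubgroup.topEquiv.toEquiv]
    rw [Nat.card_fun, Nat.card_zmod, Nat.card_eq_fintype_card, Fintype.card_fin]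
  rw [hrel, ← pow_add]
  ring_nf


theorem dot_lam_witness {d r : ℕ} (C B : Fin r → Fin d → ZMod p) (k : Fin r) (j : Fin d) :
    ∑ i, lamv p C k i *
        (Fin.snoc (Fin.append (fun j' => if j' = j then (1 : ℤ) else 0)
          (fun k' => ((B k' j).val : ℤ))) 0 : Fin (d + r + 1) → ℤ) i
      = ((B k j).val : ℤ) - ((C k j).val : ℤ) := by
  rw [dot_lam]
  have h1 : (Fin.snoc (Fin.append (fun j' => if j' = j then (1 : ℤ) else 0)
      (fun k' => ((B k' j).val : ℤ))) 0 : Fin (d + r + 1) → ℤ) (kR k) = ((B k j).val : ℤ) := by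
    simp only [kR, Fin.snoc_castSucc, Fin.append_right]
  have h2 : (Fin.snoc (Fin.append (fun j' => if j' = j then (1 : ℤ) else 0)
      (fun k' => ((B k' j).val : ℤ))) 0 : Fin (d + r + 1) → ℤ) (Fin.last (d + r)) = 0 := by
    simp
  have h3 : ∀ j' : Fin d, (Fin.snoc (Fin.append (fun j' => if j' = j then (1 : ℤ) else 0)
      (fun k' => ((B k' j).val : ℤ))) 0 : Fin (d + r + 1) → ℤ) (jD j')
      = if j' = j then (1 : ℤ) else 0 := fun j' => by
    simp [jD, Fin.snoc_castSucc, Fin.append_left]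
  rw [h1, h2]
  simp only [h3, zero_sub, mul_neg, mul_ite, mul_one, mul_zero, Finset.sum_neg_distrib,
    Finset.sum_ite_eq', Finset.mem_univ, if_true]
  ring

theorem LB_inj (hp : p.Prime) {d r : ℕ} (B B' : Fin r → Fin d → ZMod p)
    (h : LB p B = LB p B') : B = B' := by
  haveI : NeZero p := ⟨hp.ne_zero⟩
  have hp0 : (p : ℤ) ≠ 0 := Int.natCast_ne_zero.mpr hp.ne_zero
  funext k j
  set w : Fin (d + r + 1) → ℤ :=
    Fin.snoc (Fin.append (fun j' => if j' = j then (1 : ℤ) else 0)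
      (fun k' => ((B k' j).val : ℤ))) 0 with hw
  have hyB : (fun i => (p : ℤ) * w i) ∈ LB p B := by
    refine ⟨fun i i' => ⟨w i - w i', by ring⟩, fun k' => ?_⟩
    rw [dot_pmul, dot_lam_witness p B B k' j]
    simp
  rw [h] at hyB
  have h2 := hyB.2 k
  rw [dot_pmul, dot_lam_witness p B' B k j, sq] at h2
  have hdvd : (p : ℤ) ∣ ((B k j).val : ℤ) - ((B' k j).val : ℤ) :=
    (mul_dvd_mul_iff_left hp0).mp h2
  have : (((B k j).val : ℤ) : ZMod p) = (((B' k j).val : ℤ) : ZMod p) := by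
    rwa [← sub_eq_zero, ← Int.cast_sub, ZMod.intCast_zmod_eq_zero_iff_dvd]
  simpa [ZMod.natCast_val, ZMod.cast_id] using this


/-- reduction map mod N -/
def red (n N : ℕ) : (Fin n → ℤ) →+ (Fin n → ZMod N) where
  toFun x := fun i => ((x i : ℤ) : ZMod N)
  map_zero' := by funext i; simp
  map_add' x y := by funext i; push_cast [Pi.add_apply]; ring

theorem finite_subtype (n N : ℕ) (hN : N ≠ 0) (P : Subring (Fin n → ℤ) → Prop) :
    Finite {S : Subring (Fin n → ℤ) // S.toAddSubgroup.index = N ∧ P S} := by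
  haveI : NeZero N := ⟨hN⟩
  haveI : Finite (AddSubgroup (Fin n → ZMod N)) :=
    Finite.of_injective (fun H => (H : Set (Fin n → ZMod N))) SetLike.coe_injective
  have hker : ∀ S : Subring (Fin n → ℤ), S.toAddSubgroup.index = N →
      (red n N).ker ≤ S.toAddSubgroup := by
    intro S hS x hx
    rw [AddMonoidHom.mem_ker] at hx
    have hdvd : ∀ i, (N : ℤ) ∣ x i := fun i =>
      (ZMod.intCast_zmod_eq_zero_iff_dvd _ N).mp (congrFun hx i)
    have hxy : x = N • (fun i => x i / (N : ℤ)) := by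
      funext i
      have : (N • fun i => x i / (N : ℤ)) i = (N : ℤ) * (x i / (N : ℤ)) := by
        simp [nsmul_eq_mul]
      rw [this, Int.mul_ediv_cancel' (hdvd i)]
    rw [hxy, ← hS]
    exact AddSubgroup.nsmul_index_mem S.toAddSubgroup _
  refine Finite.of_injective
    (fun S : {S : Subring (Fin n → ℤ) // S.toAddSubgroup.index = N ∧ P S} =>
      S.1.toAddSubgroup.map (red n N)) ?_
  intro a b hmap
  obtain ⟨S1, hS1, hP1⟩ := a
  obtain ⟨S2, hS2, hP2⟩ := b
  simp only at hmap
  have heq : S1.toAddSubgroup = S2.toAddSubgroup := by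
    have h := congrArg (AddSubgroup.comap (red n N)) hmap
    rwa [AddSubgroup.comap_map_eq, AddSubgroup.comap_map_eq,
      sup_of_le_left (hker S1 hS1), sup_of_le_left (hker S2 hS2)] at h
  have : S1 = S2 := by
    apply SetLike.ext
    intro x
    constructor
    · intro hx
      have : x ∈ S1.toAddSubgroup := hx
      rw [heq] at this
      exact this
    · intro hx
      have : x ∈ S2.toAddSubgroup := hx
      rw [← heq] at this
      exact this
  simp [this]

end MaxGAux

open MaxGAux in
theorem card_lower {p : ℕ} (hp : p.Prime) (d r e : ℕ) (he : d + 2 * r = e) :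
    p ^ (r * d) ≤ numIrrSubrings (d + r + 1) p e := by
  haveI hfin : Finite {S : Subring (Fin (d + r + 1) → ℤ) //
      S.toAddSubgroup.index = p ^ e ∧
      ∀ x ∈ S, ∀ i j : Fin (d + r + 1), (p : ℤ) ∣ x i - x j} :=
    finite_subtype (d + r + 1) (p ^ e) (pow_ne_zero _ hp.ne_zero) _
  have key := Nat.card_le_card_of_injective
    (fun B : Fin r → Fin d → ZMod p =>
      (⟨LB p B, by rw [index_LB p hp B, he], fun x hx i j => hx.1 i j⟩ :
        {S : Subring (Fin (d + r + 1) → ℤ) //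
          S.toAddSubgroup.index = p ^ e ∧
          ∀ x ∈ S, ∀ i j : Fin (d + r + 1), (p : ℤ) ∣ x i - x j}))
    (fun B B' hBB' => LB_inj p hp B B' (congrArg Subtype.val hBB'))
  have hcard : Nat.card (Fin r → Fin d → ZMod p) = p ^ (r * d) := by
    rw [Nat.card_fun, Nat.card_fun, Nat.card_zmod,
      Nat.card_eq_fintype_card (α := Fin d), Fintype.card_fin,
      Nat.card_eq_fintype_card (α := Fin r), Fintype.card_fin, ← pow_mul, mul_comm d r]
  rw [show numIrrSubrings (d + r + 1) p e = Nat.card {S : Subring (Fin (d + r + 1) → ℤ) //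
      S.toAddSubgroup.index = p ^ e ∧
      ∀ x ∈ S, ∀ i j : Fin (d + r + 1), (p : ℤ) ∣ x i - x j} from rfl]
  rw [← hcard]
  exact key

theorem max_g_lower_bound (p e : ℕ) (hp : p.Prime) (he : 1 ≤ e) :
    ∃ n : ℕ, 1 ≤ n ∧
      p ^ (if e % 4 = 0 then e ^ 2 / 8
           else if e % 2 = 1 then (e ^ 2 - 1) / 8
           else (e ^ 2 - 4) / 8) ≤ numIrrSubrings n p e := by
  obtain ⟨q, t, ht, rfl⟩ : ∃ q t, t < 4 ∧ e = 4 * q + t :=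
    ⟨e / 4, e % 4, Nat.mod_lt _ (by norm_num), by omega⟩
  interval_cases t
  · refine ⟨2 * q + q + 1, by omega, ?_⟩
    refine le_trans (le_of_eq ?_) (card_lower hp (2 * q) q (4 * q + 0) (by omega))
    rw [if_pos (by omega)]
    congr 1
    have h2 : (4 * q + 0) ^ 2 = 8 * (q * (2 * q)) := by ring
    rw [h2, Nat.mul_div_cancel_left _ (by norm_num : (0:ℕ) < 8)]
  · refine ⟨(2 * q + 1) + q + 1, by omega, ?_⟩
    refine le_trans (le_of_eq ?_) (card_lower hp (2 * q + 1) q (4 * q + 1) (by omega))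
    rw [if_neg (by omega), if_pos (by omega)]
    congr 1
    have h2 : (4 * q + 1) ^ 2 = 8 * (q * (2 * q + 1)) + 1 := by ring
    rw [h2, Nat.add_sub_cancel, Nat.mul_div_cancel_left _ (by norm_num : (0:ℕ) < 8)]
  · refine ⟨(2 * q + 2) + q + 1, by omega, ?_⟩
    refine le_trans (le_of_eq ?_) (card_lower hp (2 * q + 2) q (4 * q + 2) (by omega))
    rw [if_neg (by omega), if_neg (by omega)]
    congr 1
    have h2 : (4 * q + 2) ^ 2 = 8 * (q * (2 * q + 2)) + 4 := by ring
    rw [h2, Nat.add_sub_cancel, Nat.mul_div_cancel_left _ (by norm_num : (0:ℕ) < 8)]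
  · refine ⟨(2 * q + 1) + (q + 1) + 1, by omega, ?_⟩
    refine le_trans (le_of_eq ?_) (card_lower hp (2 * q + 1) (q + 1) (4 * q + 3) (by omega))
    rw [if_neg (by omega), if_pos (by omega)]
    congr 1
    have h2 : (4 * q + 3) ^ 2 = 8 * ((q + 1) * (2 * q + 1)) + 1 := by ring
    rw [h2, Nat.add_sub_cancel, Nat.mul_div_cancel_left _ (by norm_num : (0:ℕ) < 8)]
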